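/- The direct product ℤ × ℤ (as an additive semigroup) does not belong to Tak(𝒮). Concretely, writing a = (1,0) and b = (0,1), and letting S_n be the additive subsemigroup of ℤ × ℤ generated by the two elements −2a and (2n−1)a + b, the chain S_1 ⊆ S_2 ⊆ S_3 ⊆ ⋯ is an ascending chain of subsemigroups, each of rank at most 2, in which every inclusion is strict; in particular the chain is not stationary. -/

import Mathlib

/-- ℤ × ℤ is not in Tak(𝒮): with a = (1,0), b = (0,1) and
`S n` the additive subsemigroup generated by `-2 • a` and `(2(n+1)-1) • a + b`
(so `S n` is the paper's `S_{n+1}`), the chain `S 0 ⊆ S 1 ⊆ ⋯` is ascending,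
each term has rank at most 2, every inclusion is strict, and the chain is not
stationary. -/
theorem stmt_0 :
    let a : ℤ × ℤ := (1, 0)
    let b : ℤ × ℤ := (0, 1)
    let S : ℕ → AddSubsemigroup (ℤ × ℤ) := fun n =>
      AddSubsemigroup.closure {(-2 : ℤ) • a, (2 * (n : ℤ) + 1) • a + b}
    (∀ n, S n ≤ S (n + 1)) ∧
    (∀ n, ∃ A : Finset (ℤ × ℤ), A.card ≤ 2 ∧
      AddSubsemigroup.closure (A : Set (ℤ × ℤ)) = S n) ∧
    (∀ n, S n ≠ S (n + 1)) ∧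
    ¬ ∃ p, ∀ n, p ≤ n → S n = S p := by
  intro a b S
  -- bound on elements of S n
  have hbound : ∀ n : ℕ, ∀ x ∈ S n, 0 ≤ x.2 ∧ x.1 ≤ (2 * (n : ℤ) + 1) * x.2 := by
    intro n x hx
    induction hx using AddSubsemigroup.closure_induction with
    | mem y hy => ?_
    | add x y hx' hy' px py => exact ⟨add_nonneg px.1 py.1, by
        have := px.2; have := py.2
        simp only [Prod.fst_add, Prod.snd_add]; nlinarith⟩
    · 
      rcases hy with hy | hy
      · subst hy
        simp only [a, Prod.smul_mk, smul_eq_mul]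
        constructor
        · norm_num
        · have : (0:ℤ) ≤ (n:ℤ) := Int.natCast_nonneg n
          norm_num
      · simp only [Set.mem_singleton_iff] at hy
        subst hy
        simp only [a, b, Prod.smul_mk, smul_eq_mul, Prod.mk_add_mk]
        constructor
        · norm_num
        · norm_num
  have hasc : ∀ n, S n ≤ S (n + 1) := by
    intro n
    apply AddSubsemigroup.closure_le.2
    intro x hx
    rcases hx with hx | hx
    · subst hx
      exact AddSubsemigroup.subset_closure (Set.mem_insert _ _)
    · simp only [Set.mem_singleton_iff] at hx
      subst hx
      have h1 : ((-2:ℤ) • a) ∈ S (n+1) :=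
        AddSubsemigroup.subset_closure (Set.mem_insert _ _)
      have h2 : ((2 * ((n+1 : ℕ) : ℤ) + 1) • a + b) ∈ S (n+1) :=
        AddSubsemigroup.subset_closure (Set.mem_insert_of_mem _ rfl)
      have h3 := AddSubsemigroup.add_mem _ h2 h1
      have heq : (2 * ((n+1 : ℕ) : ℤ) + 1) • a + b + (-2:ℤ) • a
          = (2 * (n : ℤ) + 1) • a + b := by
        simp only [a, b, Prod.smul_mk, smul_eq_mul, Prod.mk_add_mk]
        rw [Prod.mk.injEq]
        constructor <;> (push_cast; ring)
      rwa [heq] at h3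
  have hstrict : ∀ n, S n ≠ S (n + 1) := by
    intro n h
    have hmem : ((2 * ((n+1 : ℕ) : ℤ) + 1) • a + b) ∈ S (n+1) :=
      AddSubsemigroup.subset_closure (Set.mem_insert_of_mem _ rfl)
    rw [← h] at hmem
    have := (hbound n _ hmem).2
    simp only [a, b, Prod.smul_mk, smul_eq_mul, Prod.mk_add_mk] at this
    push_cast at this
    linarith
  refine ⟨hasc, ?_, hstrict, ?_⟩
  · intro n
    refine ⟨{(-2 : ℤ) • a, (2 * (n : ℤ) + 1) • a + b}, ?_, ?_⟩
    · exact Finset.card_insert_le _ _ |>.trans (by simp)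
    · congr 1
      simp
  · rintro ⟨p, hp⟩
    exact hstrict p (((hp (p+1) (by omega)).trans (hp p le_rfl).symm).symm)
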